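/- With the hypotheses of the Askey–Wilson setting below, assume moreover that z_i = z_1·q^{2−2i} for 1 ≤ i ≤ d. Then x_{i−1} − β·x_i + x_{i+1} = a′·q^{d−2i−1}(q² − q^{−2})(q³ − q^{−3})·z_i for 1 ≤ i ≤ d−1. -/

import Mathlib

private lemma rowAux {F : Type*} [Field F] {d : ℕ} (θ : ℤ → F)
    (A : Matrix (Fin (d + 1)) (Fin (d + 1)) F)
    (hA : ∀ i j : Fin (d + 1), A i j =
      if (i : ℕ) = (j : ℕ) then θ (i : ℕ)
      else if (i : ℕ) = (j : ℕ) + 1 then 1 else 0)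
    (m : ℕ) (hm : m + 1 ≤ d) (v : Fin (d+1) → F) :
    (∑ k, A ⟨m+1, by omega⟩ k * v k) = θ (m+1) * v ⟨m+1, by omega⟩ + v ⟨m, by omega⟩ := by
  have h : ∀ k : Fin (d+1), A ⟨m+1, by omega⟩ k * v k =
      (if k = (⟨m+1, by omega⟩ : Fin (d+1)) then θ (m+1) * v ⟨m+1, by omega⟩ else 0)
      + (if k = (⟨m, by omega⟩ : Fin (d+1)) then v ⟨m, by omega⟩ else 0) := by
    intro k
    rw [hA]
    rcases eq_or_ne k ⟨m+1, by omega⟩ with rfl | hk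
    · simp
    · rcases eq_or_ne k ⟨m, by omega⟩ with rfl | hk2
      · have h3 : ¬ (m + 1 = m) := by omega
        simp [hk, h3]
      · have h1 : ¬ ((m+1 : ℕ) = (k:ℕ)) := fun h => hk (Fin.ext h.symm)
        have h2 : ¬ ((m+1 : ℕ) = (k:ℕ) + 1) :=
          fun h => hk2 (by apply Fin.ext; simp only [Fin.val_mk]; omega)
        simp [h1, h2, hk, hk2]
        intro h; exact absurd (Fin.ext h.symm) hk2
  rw [Finset.sum_congr rfl (fun k _ => h k), Finset.sum_add_distrib,
    Finset.sum_ite_eq', Finset.sum_ite_eq']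
  simp

private lemma colAux {F : Type*} [Field F] {d : ℕ} (θ : ℤ → F)
    (A : Matrix (Fin (d + 1)) (Fin (d + 1)) F)
    (hA : ∀ i j : Fin (d + 1), A i j =
      if (i : ℕ) = (j : ℕ) then θ (i : ℕ)
      else if (i : ℕ) = (j : ℕ) + 1 then 1 else 0)
    (c : ℕ) (hc : c + 1 ≤ d) (v : Fin (d+1) → F) :
    (∑ k, v k * A k ⟨c, by omega⟩) = v ⟨c, by omega⟩ * θ c + v ⟨c+1, by omega⟩ := by
  have h : ∀ k : Fin (d+1), v k * A k ⟨c, by omega⟩ =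
      (if k = (⟨c, by omega⟩ : Fin (d+1)) then v ⟨c, by omega⟩ * θ c else 0)
      + (if k = (⟨c+1, by omega⟩ : Fin (d+1)) then v ⟨c+1, by omega⟩ else 0) := by
    intro k
    rw [hA]
    rcases eq_or_ne k ⟨c, by omega⟩ with rfl | hk
    · simp
    · rcases eq_or_ne k ⟨c+1, by omega⟩ with rfl | hk2
      · have h3 : ¬ (c + 1 = c) := by omega
        simp [hk, h3]
      · have h1 : ¬ ((k:ℕ) = c) :=
          fun h => hk (by apply Fin.ext; simp only [Fin.val_mk]; omega)
        have h2 : ¬ ((k:ℕ) = c + 1) :=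
          fun h => hk2 (by apply Fin.ext; simp only [Fin.val_mk]; omega)
        simp [h1, h2, hk, hk2]
  rw [Finset.sum_congr rfl (fun k _ => h k), Finset.sum_add_distrib,
    Finset.sum_ite_eq', Finset.sum_ite_eq']
  simp

set_option maxHeartbeats 2000000 in
/-- stmt10 of the paper, in the Askey–Wilson setting. -/
theorem stmt10 {F : Type*} [Field F] [IsAlgClosed F] {d : ℕ} (hd : 3 ≤ d)
    (q a a' b b' ξ : F) (hq : q ≠ 0)
    (hqru : ∀ n : ℕ, 1 ≤ n → q ^ n ≠ 1)
    (θ : ℤ → F)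
    (hθ : ∀ i : ℤ, θ i = a * q ^ (2 * i - (d : ℤ)) + a' * q ^ ((d : ℤ) - 2 * i))
    (hθdist : ∀ i j : ℕ, i ≤ d → j ≤ d → i ≠ j → θ i ≠ θ j)
    (β ρ ρs ω η ηs : F)
    (hβ : β = q ^ (2 : ℤ) + q ^ (-2 : ℤ))
    (hρ : ρ = -(a * a') * (q ^ (2 : ℤ) - q ^ (-2 : ℤ)) ^ 2)
    (hρs : ρs = -(b * b') * (q ^ (2 : ℤ) - q ^ (-2 : ℤ)) ^ 2)
    (hω : ω = (q - q⁻¹) ^ 2 *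
      ((q ^ ((d : ℤ) + 1) + q ^ (-(d : ℤ) - 1)) * ξ - (a + a') * (b + b')))
    (hη : η = -((q - q⁻¹) * (q ^ (2 : ℤ) - q ^ (-2 : ℤ)) *
      ((a + a') * ξ - a * a' * (b + b') * (q ^ ((d : ℤ) + 1) + q ^ (-(d : ℤ) - 1)))))
    (hηs : ηs = -((q - q⁻¹) * (q ^ (2 : ℤ) - q ^ (-2 : ℤ)) *
      ((b + b') * ξ - b * b' * (a + a') * (q ^ ((d : ℤ) + 1) + q ^ (-(d : ℤ) - 1)))))
    (x y z : ℕ → F)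
    (hyz : ∀ i : ℕ, 1 ≤ i → i ≤ d → y i * z i ≠ 0)
    (hy0 : y 0 = 0) (hyd1 : y (d + 1) = 0)
    (A As : Matrix (Fin (d + 1)) (Fin (d + 1)) F)
    (hA : ∀ i j : Fin (d + 1), A i j =
      if (i : ℕ) = (j : ℕ) then θ (i : ℕ)
      else if (i : ℕ) = (j : ℕ) + 1 then 1 else 0)
    (hAs : ∀ i j : Fin (d + 1), As i j =
      if (i : ℕ) = (j : ℕ) then x (i : ℕ)
      else if (i : ℕ) = (j : ℕ) + 1 then z (i : ℕ)
      else if (j : ℕ) = (i : ℕ) + 1 then y (j : ℕ) else 0)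
    (hAW1 : A ^ 2 * As - β • (A * As * A) + As * A ^ 2 - ρ • As =
      ω • A + η • (1 : Matrix (Fin (d + 1)) (Fin (d + 1)) F))
    (hAW2 : As ^ 2 * A - β • (As * A * As) + A * As ^ 2 - ρs • A =
      ω • As + ηs • (1 : Matrix (Fin (d + 1)) (Fin (d + 1)) F))
    (hz : ∀ i : ℕ, 1 ≤ i → i ≤ d → z i = z 1 * q ^ ((2 : ℤ) - 2 * (i : ℤ))) :
    ∀ i : ℕ, 1 ≤ i → i ≤ d - 1 →
      x (i - 1) - β * x i + x (i + 1) =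
        a' * q ^ ((d : ℤ) - 2 * (i : ℤ) - 1) * (q ^ (2 : ℤ) - q ^ (-2 : ℤ)) *
          (q ^ (3 : ℤ) - q ^ (-3 : ℤ)) * z i := by
  intro i hi1 hi2
  obtain ⟨j, rfl⟩ : ∃ j, i = j + 1 := ⟨i - 1, by omega⟩
  have hj2 : j + 2 ≤ d := by omega
  -- entries of As and A
  have as20 : As ⟨j+2, by omega⟩ ⟨j, by omega⟩ = 0 := by
    rw [hAs]; simp only [Fin.val_mk]
    split_ifs with h1 h2 h3 <;> first | rfl | (exfalso; omega)
  have as10 : As ⟨j+1, by omega⟩ ⟨j, by omega⟩ = z (j+1) := by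
    rw [hAs]; simp only [Fin.val_mk]
    split_ifs with h1 h2 h3 <;> first | rfl | (exfalso; omega)
  have as00 : As ⟨j, by omega⟩ ⟨j, by omega⟩ = x j := by
    rw [hAs]; simp only [Fin.val_mk]
    split_ifs with h1 h2 h3 <;> first | rfl | (exfalso; omega)
  have as11 : As ⟨j+1, by omega⟩ ⟨j+1, by omega⟩ = x (j+1) := by
    rw [hAs]; simp only [Fin.val_mk]
    split_ifs with h1 h2 h3 <;> first | rfl | (exfalso; omega)
  have as21 : As ⟨j+2, by omega⟩ ⟨j+1, by omega⟩ = z (j+2) := by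
    rw [hAs]; simp only [Fin.val_mk]
    split_ifs with h1 h2 h3 <;> first | rfl | (exfalso; omega)
  have as22 : As ⟨j+2, by omega⟩ ⟨j+2, by omega⟩ = x (j+2) := by
    rw [hAs]; simp only [Fin.val_mk]
    split_ifs with h1 h2 h3 <;> first | rfl | (exfalso; omega)
  have a20 : A ⟨j+2, by omega⟩ ⟨j, by omega⟩ = 0 := by
    rw [hA]; simp only [Fin.val_mk]
    split_ifs with h1 h2 <;> first | rfl | (exfalso; omega)
  -- products
  have m20 : (A * As) ⟨j+2, by omega⟩ ⟨j, by omega⟩ = z (j+1) := by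
    rw [Matrix.mul_apply]
    have h := rowAux θ A hA (j+1) (by omega) (fun k => As k ⟨j, by omega⟩)
    rw [h, as20, as10]
    ring
  have m10 : (A * As) ⟨j+1, by omega⟩ ⟨j, by omega⟩ =
      θ ((j+1 : ℕ) : ℤ) * z (j+1) + x j := by
    rw [Matrix.mul_apply]
    have h := rowAux θ A hA j (by omega) (fun k => As k ⟨j, by omega⟩)
    rw [h, as10, as00]
    all_goals try push_cast
    all_goals ring
  have m21 : (A * As) ⟨j+2, by omega⟩ ⟨j+1, by omega⟩ =
      θ ((j+2 : ℕ) : ℤ) * z (j+2) + x (j+1) := by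
    rw [Matrix.mul_apply]
    have h := rowAux θ A hA (j+1) (by omega) (fun k => As k ⟨j+1, by omega⟩)
    rw [h, as21, as11]
    all_goals try push_cast
    all_goals ring
  have t1 : (A * A * As) ⟨j+2, by omega⟩ ⟨j, by omega⟩ =
      θ ((j+2 : ℕ) : ℤ) * z (j+1) + (θ ((j+1 : ℕ) : ℤ) * z (j+1) + x j) := by
    rw [mul_assoc, Matrix.mul_apply]
    have h := rowAux θ A hA (j+1) (by omega) (fun k => (A * As) k ⟨j, by omega⟩)
    rw [h, m20, m10]
    all_goals try push_cast
    all_goals ring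
  have t2 : (A * As * A) ⟨j+2, by omega⟩ ⟨j, by omega⟩ =
      z (j+1) * θ ((j : ℕ) : ℤ) + (θ ((j+2 : ℕ) : ℤ) * z (j+2) + x (j+1)) := by
    rw [Matrix.mul_apply]
    have h := colAux θ A hA j (by omega) (fun k => (A * As) ⟨j+2, by omega⟩ k)
    rw [h, m20, m21]
  have s20 : (As * A) ⟨j+2, by omega⟩ ⟨j, by omega⟩ = z (j+2) := by
    rw [Matrix.mul_apply]
    have h := colAux θ A hA j (by omega) (fun k => As ⟨j+2, by omega⟩ k)
    rw [h, as20, as21]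
    ring
  have s21 : (As * A) ⟨j+2, by omega⟩ ⟨j+1, by omega⟩ =
      z (j+2) * θ ((j+1 : ℕ) : ℤ) + x (j+2) := by
    rw [Matrix.mul_apply]
    have h := colAux θ A hA (j+1) (by omega) (fun k => As ⟨j+2, by omega⟩ k)
    rw [h, as21, as22]
    all_goals try push_cast
    all_goals ring
  have t3 : (As * (A * A)) ⟨j+2, by omega⟩ ⟨j, by omega⟩ =
      z (j+2) * θ ((j : ℕ) : ℤ) + (z (j+2) * θ ((j+1 : ℕ) : ℤ) + x (j+2)) := by
    rw [← mul_assoc, Matrix.mul_apply]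
    have h := colAux θ A hA j (by omega) (fun k => (As * A) ⟨j+2, by omega⟩ k)
    rw [h, s20, s21]
  -- the (j+2, j) entry of the first Askey–Wilson relation
  have key := congrFun (congrFun hAW1 ⟨j+2, by omega⟩) ⟨j, by omega⟩
  have hne : (⟨j+2, by omega⟩ : Fin (d+1)) ≠ ⟨j, by omega⟩ := by
    simp only [Ne, Fin.mk.injEq]; omega
  rw [Matrix.sub_apply, Matrix.add_apply, Matrix.sub_apply, Matrix.add_apply,
    Matrix.smul_apply, Matrix.smul_apply, Matrix.smul_apply, Matrix.smul_apply,
    smul_eq_mul, smul_eq_mul, smul_eq_mul, smul_eq_mul,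
    Matrix.one_apply_ne hne, pow_two, t1, t2, t3, as20, a20] at key
  -- scalar consequence
  have hx : x j - β * x (j+1) + x (j+2) =
      β * (z (j+1) * θ ((j : ℕ) : ℤ) + θ ((j+2 : ℕ) : ℤ) * z (j+2))
      - θ ((j+2 : ℕ) : ℤ) * z (j+1) - θ ((j+1 : ℕ) : ℤ) * z (j+1)
      - z (j+2) * θ ((j : ℕ) : ℤ) - z (j+2) * θ ((j+1 : ℕ) : ℤ) := by
    linear_combination key
  -- explicit values
  have hu0 : (q ^ (2 * (j : ℤ) - (d : ℤ))) ≠ 0 := zpow_ne_zero _ hq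
  set u : F := q ^ (2 * (j : ℤ) - (d : ℤ)) with hu
  have c2 : q ^ (2:ℤ) = q ^ (2:ℕ) := by norm_cast
  have c3 : q ^ (3:ℤ) = q ^ (3:ℕ) := by norm_cast
  have c4 : q ^ (4:ℤ) = q ^ (4:ℕ) := by norm_cast
  have c2' : q ^ (-2:ℤ) = (q ^ (2:ℕ))⁻¹ := by rw [zpow_neg, c2]
  have c3' : q ^ (-3:ℤ) = (q ^ (3:ℕ))⁻¹ := by rw [zpow_neg, c3]
  have c4' : q ^ (-4:ℤ) = (q ^ (4:ℕ))⁻¹ := by rw [zpow_neg, c4]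
  have hθ0 : θ ((j : ℕ) : ℤ) = a * u + a' * u⁻¹ := by
    rw [hθ, hu, show ((d : ℤ) - 2 * (j : ℤ)) = -(2 * (j : ℤ) - (d : ℤ)) by ring,
      zpow_neg]
  have hθ1 : θ ((j+1 : ℕ) : ℤ) = a * (u * q ^ (2:ℕ)) + a' * (u⁻¹ * (q ^ (2:ℕ))⁻¹) := by
    rw [hθ, hu, show (2 * ((j+1 : ℕ) : ℤ) - (d : ℤ)) = (2 * (j : ℤ) - (d : ℤ)) + 2 by
        push_cast; ring,
      show ((d : ℤ) - 2 * ((j+1 : ℕ) : ℤ)) = -(2 * (j : ℤ) - (d : ℤ)) + (-2) by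
        push_cast; ring,
      zpow_add₀ hq, zpow_add₀ hq, zpow_neg, c2, c2']
  have hθ2 : θ ((j+2 : ℕ) : ℤ) = a * (u * q ^ (4:ℕ)) + a' * (u⁻¹ * (q ^ (4:ℕ))⁻¹) := by
    rw [hθ, hu, show (2 * ((j+2 : ℕ) : ℤ) - (d : ℤ)) = (2 * (j : ℤ) - (d : ℤ)) + 4 by
        push_cast; ring,
      show ((d : ℤ) - 2 * ((j+2 : ℕ) : ℤ)) = -(2 * (j : ℤ) - (d : ℤ)) + (-4) by
        push_cast; ring,
      zpow_add₀ hq, zpow_add₀ hq, zpow_neg, c4, c4']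
  have hz2 : z (j+2) = z (j+1) * (q ^ (2:ℕ))⁻¹ := by
    rw [hz (j+1) (by omega) (by omega), hz (j+2) (by omega) (by omega),
      mul_assoc, ← c2', ← zpow_add₀ hq]
    congr 2
    push_cast; ring
  have hge : q ^ ((d : ℤ) - 2 * ((j+1 : ℕ) : ℤ) - 1) = u⁻¹ * (q ^ (3:ℕ))⁻¹ := by
    rw [hu, show ((d : ℤ) - 2 * ((j+1 : ℕ) : ℤ) - 1) = -(2 * (j : ℤ) - (d : ℤ)) + (-3) by
        push_cast; ring,
      zpow_add₀ hq, zpow_neg, c3']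
  show x j - β * x (j+1) + x (j+2) =
      a' * q ^ ((d : ℤ) - 2 * ((j+1 : ℕ) : ℤ) - 1) * (q ^ (2 : ℤ) - q ^ (-2 : ℤ)) *
        (q ^ (3 : ℤ) - q ^ (-3 : ℤ)) * z (j+1)
  rw [hx, hθ0, hθ1, hθ2, hβ, hz2, hge, c2, c2', c3, c3']
  have hq2 : q ^ (2:ℕ) ≠ 0 := pow_ne_zero _ hq
  have hq3 : q ^ (3:ℕ) ≠ 0 := pow_ne_zero _ hq
  have hq4 : q ^ (4:ℕ) ≠ 0 := pow_ne_zero _ hq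
  have hqi : q * q⁻¹ = 1 := mul_inv_cancel₀ hq
  linear_combination (q^2*q⁻¹^2 + q^3*q⁻¹^3 + q^4 + q^5*q⁻¹) * (z (j+1) * a * u) * hqi +
    (q⁻¹^2 + (2:F)*q⁻¹^4 + q*q⁻¹^3 + (2:F)*q*q⁻¹^5 - q^2 + q^2*q⁻¹^4 - q^3*q⁻¹ - q^4*q⁻¹^2) * (z (j+1) * a' * u⁻¹) * hqi
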